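/- Let $\mathcal{A}$ be a C*-algebra, $K \subseteq [-1,1]$ with $0$ a limit point, and let $[\mathcal{A}]_K$ be the completion of $(\mathcal{A}[Z], \|\cdot\|_K)$. Every element $F \in [\mathcal{A}]_K$ has a unique representation $F = a + G$ with $a \in \mathcal{A}$ (identified with constant power series) and $G \in \hat{\mathcal{A}}_1$, the closure of the set of power series with zero constant term. -/

import Mathlib

open Filter Topology BoundedContinuousFunction

/-- The image of the pre-C*-algebra `𝒜[Z]` inside `C_b(K, 𝒜)` under evaluation: bounded
continuous functions of the form `t ↦ ∑ aₙ tⁿ` with `∑ ‖aₙ‖ < ∞`.  Its closure is the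
Cauchy extension `[𝒜]_K`. -/
def SAll (A : Type*) [NormedAddCommGroup A] [Module ℝ A] (K : Set ℝ) :
    Set (↥K →ᵇ A) :=
  {f | ∃ a : ℕ → A, Summable (fun n => ‖a n‖) ∧ ∀ t : K, f t = ∑' n, (t : ℝ) ^ n • a n}

/-- Power series with zero constant term; the closure of this set is `𝒜̂₁`. -/
def SOne (A : Type*) [NormedAddCommGroup A] [Module ℝ A] (K : Set ℝ) :
    Set (↥K →ᵇ A) :=
  {f | ∃ a : ℕ → A, Summable (fun n => ‖a n‖) ∧ a 0 = 0 ∧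
      ∀ t : K, f t = ∑' n, (t : ℝ) ^ n • a n}

section Aux

variable {A : Type*} [NormedAddCommGroup A] [NormedSpace ℝ A] [CompleteSpace A] {K : Set ℝ}

lemma aux_summable (a : ℕ → A) (ha : Summable fun n => ‖a n‖) {t : ℝ} (ht : |t| ≤ 1) :
    Summable fun n => t ^ n • a n := by
  refine Summable.of_norm (ha.of_nonneg_of_le (fun n => norm_nonneg _) (fun n => ?_))
  rw [norm_smul, Real.norm_eq_abs, abs_pow]
  exact mul_le_of_le_one_left (norm_nonneg _) (pow_le_one₀ (abs_nonneg t) ht)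

lemma aux_tail_summable (a : ℕ → A) (ha : Summable fun n => ‖a n‖) {t : ℝ} (ht : |t| ≤ 1) :
    Summable fun n => t ^ (n + 1) • a (n + 1) :=
  (summable_nat_add_iff 1).2 (aux_summable a ha ht)

lemma aux_tail_bound (a : ℕ → A) (ha : Summable fun n => ‖a n‖) {t : ℝ} (ht : |t| ≤ 1) :
    ‖∑' n, t ^ (n + 1) • a (n + 1)‖ ≤ |t| * ∑' n, ‖a n‖ := by
  have hs : Summable fun n => ‖a (n + 1)‖ := (summable_nat_add_iff 1).2 ha
  have hb : ∀ n, ‖t ^ (n + 1) • a (n + 1)‖ ≤ |t| * ‖a (n + 1)‖ := by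
    intro n
    rw [norm_smul, Real.norm_eq_abs, abs_pow]
    have h1 : |t| ^ (n + 1) ≤ |t| := by
      calc |t| ^ (n + 1) ≤ |t| ^ 1 := pow_le_pow_of_le_one (abs_nonneg t) ht (by omega)
      _ = |t| := pow_one _
    exact mul_le_mul_of_nonneg_right h1 (norm_nonneg _)
  have hsum : Summable fun n => ‖t ^ (n + 1) • a (n + 1)‖ :=
    (hs.mul_left |t|).of_nonneg_of_le (fun n => norm_nonneg _) hb
  calc ‖∑' n, t ^ (n + 1) • a (n + 1)‖ ≤ ∑' n, ‖t ^ (n + 1) • a (n + 1)‖ :=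
        norm_tsum_le_tsum_norm hsum
    _ ≤ ∑' n, |t| * ‖a (n + 1)‖ := Summable.tsum_le_tsum hb hsum (hs.mul_left |t|)
    _ = |t| * ∑' n, ‖a (n + 1)‖ := tsum_mul_left
    _ ≤ |t| * ∑' n, ‖a n‖ := by
        refine mul_le_mul_of_nonneg_left ?_ (abs_nonneg t)
        have := (Summable.sum_add_tsum_nat_add (f := fun n => ‖a n‖) 1 ha).symm
        rw [this]
        have : 0 ≤ ∑ i ∈ Finset.range 1, ‖a i‖ :=
          Finset.sum_nonneg fun i _ => norm_nonneg _
        linarith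

/-- Bound for elements of `SOne`: `‖g t‖ ≤ |t| * C`. -/
lemma aux_SOne_bound (hK : K ⊆ Set.Icc (-1) 1) {g : ↥K →ᵇ A} (hg : g ∈ SOne A K) :
    ∃ C : ℝ, 0 ≤ C ∧ ∀ t : K, ‖g t‖ ≤ |(t : ℝ)| * C := by
  obtain ⟨a, ha, ha0, hgt⟩ := hg
  refine ⟨∑' n, ‖a n‖, tsum_nonneg fun n => norm_nonneg _, fun t => ?_⟩
  have ht : |(t : ℝ)| ≤ 1 := abs_le.2 ⟨(hK t.2).1, (hK t.2).2⟩
  rw [hgt t, Summable.tsum_eq_zero_add (aux_summable a ha ht)]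
  simp only [ha0, smul_zero, zero_add]
  exact aux_tail_bound a ha ht

/-- Decomposition of an element of `SAll`: constant term, bound, and tail in `SOne`. -/
lemma aux_SAll_decomp (hK : K ⊆ Set.Icc (-1) 1) {f : ↥K →ᵇ A} (hf : f ∈ SAll A K) :
    ∃ c : A, ∃ C : ℝ, 0 ≤ C ∧ (∀ t : K, ‖f t - c‖ ≤ |(t : ℝ)| * C) ∧
      f - BoundedContinuousFunction.const (↥K) c ∈ SOne A K := by
  obtain ⟨a, ha, hft⟩ := hf
  have habs : ∀ t : K, |(t : ℝ)| ≤ 1 := fun t => abs_le.2 ⟨(hK t.2).1, (hK t.2).2⟩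
  have key : ∀ t : K, f t - a 0 = ∑' n, (t : ℝ) ^ (n + 1) • a (n + 1) := by
    intro t
    rw [hft t, Summable.tsum_eq_zero_add (aux_summable a ha (habs t))]
    simp
  refine ⟨a 0, ∑' n, ‖a n‖, tsum_nonneg fun n => norm_nonneg _, fun t => ?_, ?_⟩
  · rw [key t]; exact aux_tail_bound a ha (habs t)
  · refine ⟨Function.update a 0 0, ?_, Function.update_self 0 0 a, fun t => ?_⟩
    · refine ha.of_nonneg_of_le (fun n => norm_nonneg _) (fun n => ?_)
      rcases n with _ | n
      · simp
      · rw [Function.update_of_ne (by omega)]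
    · have hs : Summable fun n => (t : ℝ) ^ n • Function.update a 0 0 n := by
        refine aux_summable _ ?_ (habs t)
        refine ha.of_nonneg_of_le (fun n => norm_nonneg _) (fun n => ?_)
        rcases n with _ | n
        · simp
        · rw [Function.update_of_ne (by omega)]
      rw [Summable.tsum_eq_zero_add hs]
      simp only [Function.update_self, smul_zero, zero_add]
      have : ∀ n : ℕ, (t : ℝ) ^ (n + 1) • Function.update a 0 0 (n + 1)
          = (t : ℝ) ^ (n + 1) • a (n + 1) := by
        intro n; rw [Function.update_of_ne (by omega)]
      rw [tsum_congr this]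
      simp only [BoundedContinuousFunction.sub_apply, BoundedContinuousFunction.const_apply]
      exact key t

lemma aux_small_t (h0 : AccPt (0 : ℝ) (Filter.principal K)) {δ : ℝ} (hδ : 0 < δ) :
    ∃ t : K, |(t : ℝ)| < δ := by
  obtain ⟨y, hy, -⟩ := (accPt_iff_nhds (x := 0) (C := K)).1 h0 (Metric.ball 0 δ) (Metric.ball_mem_nhds 0 hδ)
  refine ⟨⟨y, hy.2⟩, ?_⟩
  simpa [Real.dist_eq] using hy.1

/-- A constant function in the closure of `SOne` must be zero. -/
lemma aux_const_zero (hK : K ⊆ Set.Icc (-1) 1) (h0 : AccPt (0 : ℝ) (Filter.principal K))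
    {c : A} (hc : BoundedContinuousFunction.const (↥K) c ∈ closure (SOne A K)) : c = 0 := by
  rw [← norm_le_zero_iff]
  refine le_of_forall_pos_le_add (fun ε hε => ?_)
  rw [zero_add]
  obtain ⟨g, hg, hdist⟩ := Metric.mem_closure_iff.1 hc (ε / 2) (by linarith)
  obtain ⟨C, hC, hbound⟩ := aux_SOne_bound hK hg
  have hC1 : (0:ℝ) < C + 1 := by linarith
  obtain ⟨t, ht⟩ := aux_small_t h0 (div_pos (half_pos hε) hC1)
  have h1 : ‖c - g t‖ ≤ ε / 2 := by
    have := BoundedContinuousFunction.dist_coe_le_dist (f := BoundedContinuousFunction.const (↥K) c)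
      (g := g) t
    rw [dist_eq_norm] at this
    simpa using this.trans hdist.le
  have h2 : ‖g t‖ ≤ ε / 2 := by
    refine (hbound t).trans ?_
    have : |(t : ℝ)| * C ≤ |(t : ℝ)| * (C + 1) :=
      mul_le_mul_of_nonneg_left (by linarith) (abs_nonneg _)
    refine this.trans ?_
    calc |(t : ℝ)| * (C + 1) ≤ ε / 2 / (C + 1) * (C + 1) :=
          mul_le_mul_of_nonneg_right ht.le hC1.le
      _ = ε / 2 := div_mul_cancel₀ _ hC1.ne'
  calc ‖c‖ ≤ ‖c - g t‖ + ‖g t‖ := by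
        have := norm_add_le (c - g t) (g t); simpa using this
    _ ≤ ε / 2 + ε / 2 := add_le_add h1 h2
    _ = ε := by ring

/-- `SOne` is closed under subtraction. -/
lemma aux_SOne_sub (hK : K ⊆ Set.Icc (-1) 1) {g h : ↥K →ᵇ A}
    (hg : g ∈ SOne A K) (hh : h ∈ SOne A K) : g - h ∈ SOne A K := by
  obtain ⟨a, ha, ha0, hgt⟩ := hg
  obtain ⟨b, hb, hb0, hht⟩ := hh
  refine ⟨a - b, ?_, by simp [ha0, hb0], fun t => ?_⟩
  · refine (ha.add hb).of_nonneg_of_le (fun n => norm_nonneg _) (fun n => ?_)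
    exact norm_sub_le _ _
  · have habs : |(t : ℝ)| ≤ 1 := abs_le.2 ⟨(hK t.2).1, (hK t.2).2⟩
    have hsa := aux_summable a ha habs
    have hsb := aux_summable b hb habs
    simp only [BoundedContinuousFunction.sub_apply, hgt t, hht t]
    rw [← Summable.tsum_sub hsa hsb]
    exact tsum_congr fun n => by simp [smul_sub, Pi.sub_apply]

end Aux

/-- Every element `F` of the Cauchy extension `[𝒜]_K` (the completion of `𝒜[Z]` with the
norm `‖·‖_K`, realized as the closure of the evaluation functions in `C_b(K,𝒜)`) has a
unique representation `F = a + G` with `a ∈ 𝒜` (a constant power series) and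
`G ∈ 𝒜̂₁` (the closure of the series with zero constant term). -/
theorem unique_decomposition {A : Type*} [NonUnitalNormedRing A]
    [StarRing A] [CStarRing A] [CompleteSpace A] [NormedSpace ℝ A]
    [IsScalarTower ℝ A A] [SMulCommClass ℝ A A]
    (K : Set ℝ) (hK : K ⊆ Set.Icc (-1) 1)
    (h0 : AccPt (0 : ℝ) (Filter.principal K)) :
    ∀ F ∈ closure (SAll A K), ∃! p : A × (↥K →ᵇ A),
      p.2 ∈ closure (SOne A K) ∧
      F = BoundedContinuousFunction.const (↥K) p.1 + p.2 := by
  intro F hF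
  -- choose approximating sequence
  have hseq : ∀ n : ℕ, ∃ f ∈ SAll A K, dist F f < 1 / (n + 1) := by
    intro n
    refine Metric.mem_closure_iff.1 hF _ ?_
    have : (0:ℝ) < (n:ℝ) + 1 := by positivity
    positivity
  choose f hfS hfd using hseq
  choose c C hC hbound hSOne using fun n => aux_SAll_decomp hK (hfS n)
  -- the constant terms form a Cauchy sequence
  have hkey : ∀ n m : ℕ, ‖c n - c m‖ ≤ dist (f n) (f m) := by
    intro n m
    refine le_of_forall_pos_le_add (fun ε hε => ?_)
    have hCnm : (0:ℝ) < C n + C m + 1 := by have := hC n; have := hC m; linarith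
    obtain ⟨t, ht⟩ := aux_small_t h0 (div_pos hε hCnm)
    have h1 : ‖f n t - c n‖ ≤ |(t : ℝ)| * C n := hbound n t
    have h2 : ‖f m t - c m‖ ≤ |(t : ℝ)| * C m := hbound m t
    have h3 : ‖f n t - f m t‖ ≤ dist (f n) (f m) := by
      have := BoundedContinuousFunction.dist_coe_le_dist (f := f n) (g := f m) t
      rwa [dist_eq_norm] at this
    have h4 : |(t : ℝ)| * C n + |(t : ℝ)| * C m ≤ ε := by
      have : |(t : ℝ)| * C n + |(t : ℝ)| * C m ≤ |(t : ℝ)| * (C n + C m + 1) := by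
        have := abs_nonneg (t : ℝ)
        nlinarith [hC n, hC m]
      refine this.trans ?_
      calc |(t : ℝ)| * (C n + C m + 1) ≤ ε / (C n + C m + 1) * (C n + C m + 1) :=
            mul_le_mul_of_nonneg_right ht.le hCnm.le
        _ = ε := div_mul_cancel₀ _ hCnm.ne'
    calc ‖c n - c m‖ ≤ ‖c n - f n t‖ + ‖f n t - f m t‖ + ‖f m t - c m‖ := by
          have := norm_add₃_le (a := c n - f n t) (b := f n t - f m t) (c := f m t - c m)
          simpa using this
      _ ≤ |(t : ℝ)| * C n + dist (f n) (f m) + |(t : ℝ)| * C m := by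
          rw [norm_sub_rev (c n)]
          exact add_le_add (add_le_add h1 h3) h2
      _ ≤ dist (f n) (f m) + ε := by linarith
  have hcauchy : CauchySeq c := by
    refine cauchySeq_of_le_tendsto_0 (fun N => 2 / (N + 1)) (fun n m N hn hm => ?_) ?_
    · rw [dist_eq_norm]
      refine (hkey n m).trans ?_
      have h1 : dist (f n) (f m) ≤ dist F (f n) + dist F (f m) := dist_triangle_left _ _ _
      refine h1.trans ?_
      have hn1 : (1:ℝ) / (n + 1) ≤ 1 / (N + 1) := by
        apply div_le_div_of_nonneg_left (by norm_num) (by positivity)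
        have : N + 1 ≤ n + 1 := by omega
        exact_mod_cast this
      have hm1 : (1:ℝ) / (m + 1) ≤ 1 / (N + 1) := by
        apply div_le_div_of_nonneg_left (by norm_num) (by positivity)
        have : N + 1 ≤ m + 1 := by omega
        exact_mod_cast this
      have := (hfd n).le.trans hn1
      have := (hfd m).le.trans hm1
      have : dist F (f n) + dist F (f m) ≤ 1 / (N + 1) + 1 / (N + 1) := by
        exact add_le_add ((hfd n).le.trans hn1) ((hfd m).le.trans hm1)
      refine this.trans (le_of_eq ?_)
      ring
    · have h := tendsto_one_div_add_atTop_nhds_zero_nat.const_mul (2:ℝ)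
      simpa [div_eq_mul_inv] using h
  obtain ⟨a, ha⟩ := cauchySeq_tendsto_of_complete hcauchy
  -- the decomposition
  have hGmem : F - BoundedContinuousFunction.const (↥K) a ∈ closure (SOne A K) := by
    rw [Metric.mem_closure_iff]
    intro ε hε
    have h1 : Tendsto (fun n : ℕ => (1:ℝ) / (n + 1)) atTop (𝓝 0) := by
      have := tendsto_one_div_add_atTop_nhds_zero_nat (𝕜 := ℝ)
      simpa using this
    have h2 : ∀ᶠ n : ℕ in atTop, (1:ℝ) / (n + 1) < ε / 2 :=
      (h1.eventually (eventually_lt_nhds (by linarith : (0:ℝ) < ε / 2)))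
    have h3 : ∀ᶠ n in atTop, dist (c n) a < ε / 2 :=
      ha.eventually (Metric.ball_mem_nhds a (by linarith : (0:ℝ) < ε / 2))
    obtain ⟨n, hn1, hn2⟩ := (h2.and h3).exists
    refine ⟨f n - BoundedContinuousFunction.const (↥K) (c n), hSOne n, ?_⟩
    calc dist (F - BoundedContinuousFunction.const (↥K) a)
          (f n - BoundedContinuousFunction.const (↥K) (c n))
        ≤ dist F (f n) + dist (BoundedContinuousFunction.const (↥K) a)
            (BoundedContinuousFunction.const (↥K) (c n)) := dist_sub_sub_le _ _ _ _
      _ ≤ dist F (f n) + dist a (c n) := by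
          gcongr
          exact (BoundedContinuousFunction.dist_le dist_nonneg).2 fun t => le_rfl
      _ < ε / 2 + ε / 2 := by
          rw [dist_comm a (c n)]
          exact add_lt_add ((hfd n).trans_le hn1.le) hn2
      _ = ε := by ring
  refine ⟨(a, F - BoundedContinuousFunction.const (↥K) a), ⟨hGmem, by rw [add_comm, sub_add_cancel]⟩, ?_⟩
  rintro ⟨a', G'⟩ ⟨hG', hFeq⟩
  -- uniqueness
  have hsub : G' - (F - BoundedContinuousFunction.const (↥K) a) ∈ closure (SOne A K) :=
    map_mem_closure₂ (by fun_prop : Continuous fun p : (↥K →ᵇ A) × (↥K →ᵇ A) => p.1 - p.2)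
      hG' hGmem (fun x hx y hy => aux_SOne_sub hK hx hy)
  have hconst : G' - (F - BoundedContinuousFunction.const (↥K) a)
      = BoundedContinuousFunction.const (↥K) (a - a') := by
    have : F = BoundedContinuousFunction.const (↥K) a' + G' := hFeq
    ext t
    simp only [BoundedContinuousFunction.sub_apply, BoundedContinuousFunction.const_apply]
    have := congrArg (fun h => h t) this
    simp only [BoundedContinuousFunction.add_apply, BoundedContinuousFunction.const_apply] at this
    rw [this]
    abel
  rw [hconst] at hsub
  have haa : a - a' = 0 := aux_const_zero hK h0 hsub
  have haa' : a' = a := (sub_eq_zero.1 haa).symm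
  subst haa'
  have : G' = F - BoundedContinuousFunction.const (↥K) a' := by
    rw [hFeq, add_comm, add_sub_cancel_right]
  rw [this]
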